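/- arXiv:1606.02750 — 2 statements merged into one kernel-verified Lean document; each statement's English description precedes it below -/
import Mathlib

section
/- Let λ, μ be real numbers with λ ≥ 1 and λ + μ > 3/2, and let n be a natural number. Then for every z in the open unit disc 𝕌 the derivative (𝕎_{λ,μ})'_n(z) is nonzero and Re(𝕎'_{λ,μ}(z)/(𝕎_{λ,μ})'_n(z)) ≥ (2(λ+μ)−3)/(2(λ+μ)−1). -/
/-- The derivative of the second normalized Wright function:
`𝕎'_{λ,μ}(z) = 1 + ∑_{m=1}^∞ (Γ(λ+μ)/(m! Γ(λm+λ+μ))) z^m`. -/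
noncomputable def normWright2Deriv (lam mu : ℝ) (z : ℂ) : ℂ :=
  ∑' m : ℕ,
    ((Real.Gamma (lam + mu) / (Nat.factorial m * Real.Gamma (lam * m + lam + mu)) : ℝ) : ℂ)
      * z ^ m

/-- The derivative of the `n`-th partial sum:
`(𝕎_{λ,μ})'_n(z) = 1 + ∑_{m=1}^n (Γ(λ+μ)/(m! Γ(λm+λ+μ))) z^m`. -/
noncomputable def normWright2PartialDeriv (lam mu : ℝ) (n : ℕ) (z : ℂ) : ℂ :=
  ∑ m ∈ Finset.range (n + 1),
    ((Real.Gamma (lam + mu) / (Nat.factorial m * Real.Gamma (lam * m + lam + mu)) : ℝ) : ℂ)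
      * z ^ m


open Finset in
private lemma aux_two_pow_le_fact_nat (k : ℕ) : 2^k ≤ Nat.factorial (k+1) := by
  induction k with
  | zero => simp
  | succ k ih =>
      calc 2^(k+1) = 2 * 2^k := by ring
        _ ≤ 2 * Nat.factorial (k+1) := Nat.mul_le_mul_left 2 ih
        _ ≤ (k+2) * Nat.factorial (k+1) := Nat.mul_le_mul_right _ (by omega)
        _ = Nat.factorial (k+2) := (Nat.factorial_succ (k+1)).symm

private lemma aux_two_pow_le_fact (k : ℕ) : (2:ℝ)^k ≤ (Nat.factorial (k+1) : ℝ) := by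
  have := aux_two_pow_le_fact_nat k
  exact_mod_cast this

private lemma aux_pow_gamma (s : ℝ) (hs : 0 < s) (k : ℕ) :
    s^k * Real.Gamma s ≤ Real.Gamma (k + s) := by
  induction k with
  | zero => simp
  | succ k ih =>
      have hk : (0:ℝ) < (k:ℝ) + s := by positivity
      have : Real.Gamma ((k:ℝ) + s + 1) = ((k:ℝ) + s) * Real.Gamma ((k:ℝ) + s) :=
        Real.Gamma_add_one hk.ne'
      have h1 : ((k:ℕ)+1 : ℕ) + s = (k:ℝ) + s + 1 := by push_cast; ring
      rw [h1, this]
      calc s^(k+1) * Real.Gamma s = s * (s^k * Real.Gamma s) := by ring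
        _ ≤ s * Real.Gamma ((k:ℝ) + s) := by
            apply mul_le_mul_of_nonneg_left ih hs.le
        _ ≤ ((k:ℝ) + s) * Real.Gamma ((k:ℝ) + s) := by
            apply mul_le_mul_of_nonneg_right (by linarith [Nat.cast_nonneg (α := ℝ) k])
              (Real.Gamma_pos_of_pos hk).le

set_option maxHeartbeats 1000000 in
theorem re_normWright2Deriv_div_partialDeriv' (lam mu : ℝ) (hlam : 1 ≤ lam)
    (hmu : 3 / 2 < lam + mu) (n : ℕ) :
    ∀ z : ℂ, ‖z‖ < 1 →
      (∑ m ∈ Finset.range (n + 1),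
        ((Real.Gamma (lam + mu) / (Nat.factorial m * Real.Gamma (lam * m + lam + mu)) : ℝ) : ℂ)
          * z ^ m) ≠ 0 ∧
      (2 * (lam + mu) - 3) / (2 * (lam + mu) - 1) ≤
        ((∑' m : ℕ,
          ((Real.Gamma (lam + mu) / (Nat.factorial m * Real.Gamma (lam * m + lam + mu)) : ℝ) : ℂ)
            * z ^ m) / (∑ m ∈ Finset.range (n + 1),
          ((Real.Gamma (lam + mu) / (Nat.factorial m * Real.Gamma (lam * m + lam + mu)) : ℝ) : ℂ)
            * z ^ m)).re := by
  intro z hz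
  set s := lam + mu with hsdef
  have hs0 : (0:ℝ) < s := by linarith
  have hΓs : 0 < Real.Gamma s := Real.Gamma_pos_of_pos hs0
  set r : ℝ := (2*s)⁻¹ with hrdef
  have hr0 : 0 < r := by positivity
  have hr1 : r < 1 := by
    rw [hrdef, inv_lt_one_iff₀]; right; linarith
  set c : ℕ → ℝ := fun m =>
    Real.Gamma s / (Nat.factorial m * Real.Gamma (lam * m + lam + mu)) with hcdef
  have hargpos : ∀ m : ℕ, (0:ℝ) < lam * m + lam + mu := by
    intro m
    have : (0:ℝ) ≤ lam * m := by positivity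
    linarith
  have hcpos : ∀ m, 0 < c m := by
    intro m
    apply div_pos hΓs
    exact mul_pos (by exact_mod_cast m.factorial_pos) (Real.Gamma_pos_of_pos (hargpos m))
  have hc0 : c 0 = 1 := by
    simp only [hcdef, Nat.cast_zero, mul_zero, zero_add, Nat.factorial_zero, Nat.cast_one,
      one_mul]
    rw [← hsdef, div_self hΓs.ne']
  -- key coefficient bound
  have hcle : ∀ k : ℕ, c (k+1) ≤ 2 * r^(k+1) := by
    intro k
    have hmono := Real.Gamma_strictMonoOn_Ici.monotoneOn
    have hk1 : (1:ℝ) ≤ (k:ℝ) + 1 := by have := Nat.cast_nonneg (α:=ℝ) k; linarith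
    have harg : lam * ((k:ℕ)+1 : ℕ) + lam + mu = lam * ((k:ℝ)+1) + s := by
      push_cast; rw [hsdef]; ring
    have h2a : (2:ℝ) ≤ ((k:ℝ)+1) + s := by linarith
    have h2b : ((k:ℝ)+1) + s ≤ lam * ((k:ℝ)+1) + s := by nlinarith
    have hG1 : Real.Gamma (((k:ℝ)+1) + s) ≤ Real.Gamma (lam * ((k:ℝ)+1) + s) :=
      hmono (Set.mem_Ici.mpr h2a) (Set.mem_Ici.mpr (by linarith)) h2b
    have hG2 : s^(k+1) * Real.Gamma s ≤ Real.Gamma (((k:ℝ)+1) + s) := by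
      have := aux_pow_gamma s hs0 (k+1)
      rwa [show (((k:ℕ)+1 : ℕ) : ℝ) = (k:ℝ)+1 by push_cast; ring] at this
    have hfact : (2:ℝ)^k ≤ (Nat.factorial (k+1) : ℝ) := aux_two_pow_le_fact k
    have hE : (0:ℝ) < 2^k * (s^(k+1) * Real.Gamma s) := by positivity
    have hDE : 2^k * (s^(k+1) * Real.Gamma s) ≤
        (Nat.factorial (k+1) : ℝ) * Real.Gamma (lam * ((k:ℕ)+1 : ℕ) + lam + mu) := by
      rw [harg]
      exact mul_le_mul hfact (le_trans hG2 hG1) (by positivity) (by positivity)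
    have h1 : c (k+1) ≤ Real.Gamma s / (2^k * (s^(k+1) * Real.Gamma s)) := by
      exact div_le_div_of_nonneg_left hΓs.le hE hDE
    refine h1.trans_eq ?_
    rw [hrdef]
    rw [inv_pow, mul_pow]
    field_simp
    ring
  set f : ℕ → ℂ := fun m => ((c m : ℝ) : ℂ) * z ^ m with hfdef
  have hcle' : ∀ m, c m ≤ 2 * r^m := by
    intro m
    cases m with
    | zero => simp [hc0]
    | succ k => exact hcle k
  have hfn : ∀ m, ‖f m‖ ≤ c m := by
    intro m
    rw [hfdef]
    simp only [norm_mul, Complex.norm_real, norm_pow]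
    rw [Real.norm_of_nonneg (hcpos m).le]
    calc c m * ‖z‖^m ≤ c m * 1 := by
          apply mul_le_mul_of_nonneg_left _ (hcpos m).le
          exact pow_le_one₀ (norm_nonneg z) hz.le
      _ = c m := mul_one _
  have hgeo : Summable (fun m : ℕ => 2 * r^m) :=
    (summable_geometric_of_lt_one hr0.le hr1).mul_left 2
  have hsum : Summable f :=
    Summable.of_norm_bounded hgeo (fun m => (hfn m).trans (hcle' m))
  set W : ℂ := ∑' m, f m with hWdef
  set P : ℂ := ∑ m ∈ Finset.range (n+1), f m with hPdef
  set T : ℂ := ∑' i, f (i + (n+1)) with hTdef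
  have hWPT : P + T = W := Summable.sum_add_tsum_nat_add (n+1) hsum
  have hQ : P = (∑ i ∈ Finset.range n, f (i+1)) + f 0 := Finset.sum_range_succ' f n
  have hf0 : f 0 = 1 := by
    rw [hfdef]; simp [hc0]
  set Q : ℂ := ∑ i ∈ Finset.range n, f (i+1) with hQdef
  -- bounds
  set S : ℝ := 2 / (2*s - 1) with hSdef
  have h2s1 : (0:ℝ) < 2*s - 1 := by linarith
  have hS1 : S < 1 := by
    rw [hSdef, div_lt_one h2s1]; linarith
  have hg1 : Summable (fun i : ℕ => 2 * r^(i+1)) := by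
    apply Summable.of_nonneg_of_le (fun i => by positivity) (fun i => ?_) hgeo
    have : r^(i+1) ≤ r^i := pow_le_pow_of_le_one hr0.le hr1.le (by omega)
    nlinarith
  have hgsum : ∑' i : ℕ, 2 * r^(i+1) = S := by
    have : (fun i : ℕ => 2 * r^(i+1)) = fun i : ℕ => (2*r) * r^i := by
      funext i; ring
    rw [this, tsum_mul_left, tsum_geometric_of_lt_one hr0.le hr1]
    rw [hSdef, hrdef]
    have h2s : (0:ℝ) < 2*s := by linarith
    field_simp
  have hsplit : (∑ i ∈ Finset.range n, 2 * r^(i+1)) + (∑' i : ℕ, 2 * r^((i+n)+1)) = S := by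
    rw [← hgsum]
    exact Summable.sum_add_tsum_nat_add n hg1
  have hqA : ‖Q‖ ≤ ∑ i ∈ Finset.range n, 2 * r^(i+1) := by
    refine (norm_sum_le _ _).trans (Finset.sum_le_sum fun i _ => ?_)
    exact (hfn (i+1)).trans (hcle i)
  have htB : ‖T‖ ≤ ∑' i : ℕ, 2 * r^((i+n)+1) := by
    rw [hTdef]
    have hsumshift : Summable (fun i : ℕ => 2 * r^((i+n)+1)) :=
      ((summable_nat_add_iff n).mpr hg1)
    refine tsum_of_norm_bounded hsumshift.hasSum (fun i => ?_)
    have : i + (n+1) = (i+n)+1 := by omega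
    rw [this]
    exact (hfn _).trans (hcle (i+n))
  have hqtS : ‖Q‖ + ‖T‖ ≤ S := by
    rw [← hsplit]; exact add_le_add hqA htB
  have hq1 : ‖Q‖ < 1 := by
    have := norm_nonneg T; linarith
  have hPnorm : 1 - ‖Q‖ ≤ ‖P‖ := by
    have h1 : (1:ℝ) = ‖P - Q‖ := by rw [hQ, hf0]; simp
    have := norm_sub_le P Q
    linarith [h1 ▸ this]
  have hPpos : (0:ℝ) < ‖P‖ := by linarith
  have hPne : P ≠ 0 := by
    intro h; rw [h, norm_zero] at hPpos; exact lt_irrefl _ hPpos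
  constructor
  · exact hPne
  · have hWP : W / P = 1 + T / P := by
      rw [← hWPT, add_div, div_self hPne]
    have hre : (W/P).re = 1 + (T/P).re := by
      rw [hWP, Complex.add_re, Complex.one_re]
    have hre2 : -‖T/P‖ ≤ (T/P).re := by
      have h1 := Complex.abs_re_le_norm (T/P)
      have := neg_abs_le (T/P).re
      linarith
    have hTP : ‖T/P‖ ≤ S := by
      rw [norm_div, div_le_iff₀ hPpos]
      have hS0 : (0:ℝ) ≤ S := by positivity
      nlinarith [norm_nonneg Q, norm_nonneg T]
    have halpha : (2 * s - 3) / (2 * s - 1) = 1 - S := by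
      rw [hSdef]; field_simp; ring
    rw [halpha, hre]
    linarith


/-- If `λ ≥ 1` and `λ + μ > 3/2`, then on the open unit disc `(𝕎_{λ,μ})'_n` is nonzero
and `Re(𝕎'_{λ,μ}(z)/(𝕎_{λ,μ})'_n(z)) ≥ (2(λ+μ)-3)/(2(λ+μ)-1)`. -/
theorem re_normWright2Deriv_div_partialDeriv (lam mu : ℝ) (hlam : 1 ≤ lam)
    (hmu : 3 / 2 < lam + mu) (n : ℕ) :
    ∀ z : ℂ, ‖z‖ < 1 →
      normWright2PartialDeriv lam mu n z ≠ 0 ∧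
      (2 * (lam + mu) - 3) / (2 * (lam + mu) - 1) ≤
        (normWright2Deriv lam mu z / normWright2PartialDeriv lam mu n z).re := by
  intro z hz
  exact re_normWright2Deriv_div_partialDeriv' lam mu hlam hmu n z hz
end

section
/- Let λ, μ be real numbers with λ ≥ 1 and λ + μ > 3/2, and let n be a natural number. Then for every z in the open unit disc 𝕌 the derivative 𝕎'_{λ,μ}(z) is nonzero and Re((𝕎_{λ,μ})'_n(z)/𝕎'_{λ,μ}(z)) ≥ (2(λ+μ)−1)/(2(λ+μ)+1). -/
lemma myGamma_mono {x y : ℝ} (hx : 2 ≤ x) (h : x ≤ y) :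
    Real.Gamma x ≤ Real.Gamma y :=
  Real.Gamma_strictMonoOn_Ici.monotoneOn (Set.mem_Ici.2 hx)
    (Set.mem_Ici.2 (hx.trans h)) h

lemma myGamma_prod {b : ℝ} (hb : 0 < b) :
    ∀ k : ℕ, Real.Gamma b * (b * (b + 1) ^ k) ≤ Real.Gamma (b + (k + 1)) := by
  intro k
  induction k with
  | zero =>
    have := Real.Gamma_add_one hb.ne'
    simp only [pow_zero, mul_one, Nat.cast_zero, zero_add]
    rw [this]; ring_nf; exact le_refl _
  | succ k ih =>
    have h1 : Real.Gamma (b + (↑(k+1) + 1)) = (b + (k+1)) * Real.Gamma (b + (k+1)) := by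
      have hne : b + ((k:ℝ) + 1) ≠ 0 := by positivity
      have := Real.Gamma_add_one hne
      push_cast
      rw [show b + ((k:ℝ) + 1 + 1) = (b + ((k:ℝ)+1)) + 1 by ring, this]
    rw [h1]
    have hG : 0 < Real.Gamma b := Real.Gamma_pos_of_pos hb
    have hknn : (0:ℝ) ≤ (k:ℝ) := Nat.cast_nonneg k
    have hle : (b+1) * (Real.Gamma b * (b * (b + 1) ^ k)) ≤ (b + (↑k + 1)) * Real.Gamma (b + (↑k + 1)) := by
      have h2 : (0:ℝ) < b + 1 := by linarith
      have h3 : b + 1 ≤ b + ((k:ℝ) + 1) := by linarith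
      have h4 : (0:ℝ) ≤ Real.Gamma b * (b * (b + 1) ^ k) := by positivity
      calc (b+1) * (Real.Gamma b * (b * (b + 1) ^ k))
          ≤ (b + ((k:ℝ)+1)) * (Real.Gamma b * (b * (b + 1) ^ k)) := by nlinarith
        _ ≤ (b + ((k:ℝ)+1)) * Real.Gamma (b + (↑k + 1)) := by
            apply mul_le_mul_of_nonneg_left ih (by linarith)
    calc Real.Gamma b * (b * (b + 1) ^ (k+1)) = (b+1) * (Real.Gamma b * (b * (b + 1) ^ k)) := by ring
      _ ≤ _ := hle

lemma myFact_ge : ∀ k : ℕ, (2:ℝ) ^ k ≤ (Nat.factorial (k+1) : ℝ) := by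
  intro k
  induction k with
  | zero => simp
  | succ k ih =>
    rw [pow_succ]
    have : (Nat.factorial (k+1+1) : ℝ) = (k+2) * Nat.factorial (k+1) := by
      rw [Nat.factorial_succ]; push_cast; ring
    rw [this]
    nlinarith [Nat.cast_nonneg (α := ℝ) (Nat.factorial (k+1))]

lemma myCoeff_bound (lam mu : ℝ) (hlam : 1 ≤ lam) (hmu : 3/2 < lam + mu) (k : ℕ) :
    Real.Gamma (lam + mu) / ((Nat.factorial (k+1)) * Real.Gamma (lam * (k+1 : ℕ) + lam + mu))
      ≤ (1/(lam+mu)) * (1/(2*(lam+mu+1)))^k := by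
  set b := lam + mu with hbdef
  have hb : (0:ℝ) < b := by linarith
  have hG : 0 < Real.Gamma b := Real.Gamma_pos_of_pos hb
  have hknn : (0:ℝ) ≤ (k:ℝ) := Nat.cast_nonneg k
  have harg2 : (2:ℝ) ≤ b + ((k:ℝ) + 1) := by linarith
  have hmono : Real.Gamma (b + ((k:ℝ) + 1)) ≤ Real.Gamma (lam * (k+1 : ℕ) + lam + mu) := by
    apply myGamma_mono harg2
    push_cast
    nlinarith
  have hgp := myGamma_prod hb k
  have hfac := myFact_ge k
  have hDpos : (0:ℝ) < (2:ℝ)^k * (Real.Gamma b * (b*(b+1)^k)) := by positivity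
  have hDle : (2:ℝ)^k * (Real.Gamma b * (b*(b+1)^k)) ≤
      (Nat.factorial (k+1) : ℝ) * Real.Gamma (lam * (k+1 : ℕ) + lam + mu) := by
    have h1 : Real.Gamma b * (b*(b+1)^k) ≤ Real.Gamma (lam * (k+1 : ℕ) + lam + mu) :=
      le_trans (hgp) hmono
    have h2 : (0:ℝ) ≤ Real.Gamma b * (b*(b+1)^k) := by positivity
    have h3 : (0:ℝ) ≤ (2:ℝ)^k := by positivity
    nlinarith
  have hstep : Real.Gamma b / ((Nat.factorial (k+1)) * Real.Gamma (lam * (k+1 : ℕ) + lam + mu))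
      ≤ Real.Gamma b / ((2:ℝ)^k * (Real.Gamma b * (b*(b+1)^k))) :=
    div_le_div_of_nonneg_left hG.le hDpos hDle
  refine hstep.trans (le_of_eq ?_)
  rw [div_pow, one_pow, mul_pow]
  field_simp


set_option maxHeartbeats 1000000 in
/-- If `λ ≥ 1` and `λ + μ > 3/2`, then on the open unit disc `𝕎'_{λ,μ}` is nonzero
and `Re((𝕎_{λ,μ})'_n(z)/𝕎'_{λ,μ}(z)) ≥ (2(λ+μ)-1)/(2(λ+μ)+1)`. -/
theorem re_partialDeriv_div_normWright2Deriv (lam mu : ℝ) (hlam : 1 ≤ lam)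
    (hmu : 3 / 2 < lam + mu) (n : ℕ) :
    ∀ z : ℂ, ‖z‖ < 1 →
      normWright2Deriv lam mu z ≠ 0 ∧
      (2 * (lam + mu) - 1) / (2 * (lam + mu) + 1) ≤
        (normWright2PartialDeriv lam mu n z / normWright2Deriv lam mu z).re := by
  intro z hz
  have hb : (0:ℝ) < lam + mu := by linarith
  have hG : 0 < Real.Gamma (lam + mu) := Real.Gamma_pos_of_pos hb
  set c : ℕ → ℝ := fun m =>
    Real.Gamma (lam + mu) / (Nat.factorial m * Real.Gamma (lam * m + lam + mu)) with hcdef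
  have hcpos : ∀ m : ℕ, 0 < c m := by
    intro m
    have hm : (0:ℝ) ≤ (m:ℝ) := Nat.cast_nonneg m
    have harg : 0 < lam * m + lam + mu := by nlinarith
    have h1 := Real.Gamma_pos_of_pos harg
    have h2 : (0:ℝ) < (Nat.factorial m : ℝ) := by exact_mod_cast Nat.factorial_pos m
    exact div_pos hG (by positivity)
  have hc0 : c 0 = 1 := by
    simp only [hcdef, Nat.cast_zero, mul_zero, zero_add, Nat.factorial_zero, Nat.cast_one, one_mul]
    exact div_self hG.ne'
  set r : ℝ := 1/(2*(lam+mu+1)) with hrdef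
  have hr0 : 0 < r := by rw [hrdef]; positivity
  have hr1 : r < 1 := by rw [hrdef, div_lt_one (by linarith)]; linarith
  have hcb : ∀ k : ℕ, c (k+1) ≤ (1/(lam+mu)) * r ^ k :=
    fun k => myCoeff_bound lam mu hlam hmu k
  clear_value r
  have hgeom : Summable (fun k : ℕ => (1/(lam+mu)) * r ^ k) :=
    (summable_geometric_of_lt_one hr0.le hr1).mul_left _
  have hcsum1 : Summable (fun k : ℕ => c (k+1)) :=
    Summable.of_nonneg_of_le (fun k => (hcpos _).le) hcb hgeom
  have hcsum : Summable c := (summable_nat_add_iff 1).mp hcsum1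
  have hS : ∑' k : ℕ, c (k+1) ≤ 2/(2*(lam+mu)-1) := by
    have h1 : ∑' k : ℕ, c (k+1) ≤ ∑' k : ℕ, (1/(lam+mu)) * r ^ k :=
      Summable.tsum_le_tsum hcb hcsum1 hgeom
    have h2 : ∑' k : ℕ, (1/(lam+mu)) * r ^ k = (1/(lam+mu)) * (1-r)⁻¹ := by
      rw [tsum_mul_left, tsum_geometric_of_lt_one hr0.le hr1]
    rw [h2] at h1
    refine h1.trans ?_
    have h1r : 1 - r = (2*(lam+mu)+1)/(2*(lam+mu)+2) := by
      rw [hrdef]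
      rw [eq_div_iff (by linarith)]
      field_simp
      ring
    have hinv : (1-r)⁻¹ = (2*(lam+mu)+2)/(2*(lam+mu)+1) := by
      rw [h1r, inv_div]
    rw [hinv, show (1/(lam+mu)) * ((2*(lam+mu)+2)/(2*(lam+mu)+1))
        = (2*(lam+mu)+2)/((lam+mu)*(2*(lam+mu)+1)) by rw [div_mul_div_comm, one_mul],
      div_le_div_iff₀ (by positivity) (by linarith)]
    nlinarith
  -- complex series
  set g : ℕ → ℂ := fun m => ((c m : ℝ) : ℂ) * z ^ m with hgdef
  have hgnormeq : ∀ m : ℕ, ‖g m‖ = c m * ‖z‖ ^ m := by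
    intro m
    rw [hgdef]
    simp only [norm_mul, Complex.norm_real, norm_pow, Real.norm_eq_abs,
      abs_of_pos (hcpos m)]
  have hgnorm : ∀ m : ℕ, ‖g m‖ ≤ c m := by
    intro m
    rw [hgnormeq m]
    have h1 : ‖z‖ ^ m ≤ 1 := pow_le_one₀ (norm_nonneg z) hz.le
    nlinarith [hcpos m]
  have hgsum : Summable g := Summable.of_norm_bounded hcsum hgnorm
  have hW : normWright2Deriv lam mu z = ∑' m : ℕ, g m := rfl
  have hP : normWright2PartialDeriv lam mu n z = ∑ m ∈ Finset.range (n+1), g m := rfl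
  clear_value c g
  set T : ℂ := ∑' k : ℕ, g (k + (n+1)) with hTdef
  have hsplit : ∑ m ∈ Finset.range (n+1), g m + T = ∑' m : ℕ, g m :=
    Summable.sum_add_tsum_nat_add (n+1) hgsum
  clear_value T
  have hcsumtail : Summable (fun k : ℕ => c (k + (n+1))) :=
    (summable_nat_add_iff (n+1)).mpr hcsum
  have hgnormtail : Summable (fun k : ℕ => ‖g (k + (n+1))‖) :=
    Summable.of_nonneg_of_le (fun _ => norm_nonneg _) (fun k => hgnorm _) hcsumtail
  set B : ℝ := ∑' k : ℕ, c (k + (n+1)) with hBdef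
  have hTnorm : ‖T‖ ≤ B := by
    calc ‖T‖ ≤ ∑' k : ℕ, ‖g (k + (n+1))‖ := by
          rw [hTdef]; exact norm_tsum_le_tsum_norm hgnormtail
      _ ≤ B := Summable.tsum_le_tsum (fun k => hgnorm _) hgnormtail hcsumtail
  set A : ℝ := ∑ m ∈ Finset.range n, c (m+1) with hAdef
  have hABS : A + B = ∑' k : ℕ, c (k+1) := Summable.sum_add_tsum_nat_add n hcsum1
  clear_value A B
  have hA0 : 0 ≤ A := by
    rw [hAdef]; exact Finset.sum_nonneg fun m _ => (hcpos _).le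
  have hB0 : 0 ≤ B := by
    rw [hBdef]; exact tsum_nonneg fun k => (hcpos _).le
  have hPnorm : 1 - A ≤ ‖∑ m ∈ Finset.range (n+1), g m‖ := by
    have hsplitP : ∑ m ∈ Finset.range (n+1), g m
        = g 0 + ∑ m ∈ Finset.range n, g (m+1) := by
      rw [Finset.sum_range_succ']
      ring
    have hg0 : g 0 = 1 := by
      rw [hgdef]; simp [hc0]
    have hrest : ‖∑ m ∈ Finset.range n, g (m+1)‖ ≤ A := by
      calc ‖∑ m ∈ Finset.range n, g (m+1)‖ ≤ ∑ m ∈ Finset.range n, ‖g (m+1)‖ :=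
            norm_sum_le _ _
        _ ≤ A := by rw [hAdef]; exact Finset.sum_le_sum fun m _ => hgnorm _
    have htri : ‖g 0‖ ≤ ‖g 0 + ∑ m ∈ Finset.range n, g (m+1)‖
        + ‖∑ m ∈ Finset.range n, g (m+1)‖ := by
      have := norm_add_le (g 0 + ∑ m ∈ Finset.range n, g (m+1))
        (-(∑ m ∈ Finset.range n, g (m+1)))
      simpa using this
    rw [hsplitP, hg0]
    rw [hg0] at htri
    simp only [norm_one] at htri
    linarith
  have hAB1 : A + B ≤ 2/(2*(lam+mu)-1) := hABS ▸ hS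
  have hABlt : A + B < 1 := by
    have : (2:ℝ)/(2*(lam+mu)-1) < 1 := by
      rw [div_lt_one (by linarith)]; linarith
    linarith
  have hWnorm : 1 - (A + B) ≤ ‖∑' m : ℕ, g m‖ := by
    have htri : ‖∑ m ∈ Finset.range (n+1), g m‖ ≤ ‖∑' m : ℕ, g m‖ + ‖T‖ := by
      have := norm_add_le (∑' m : ℕ, g m) (-T)
      rw [← hsplit] at this ⊢
      simpa using this
    linarith
  have hWne : normWright2Deriv lam mu z ≠ 0 := by
    rw [hW]
    intro h
    rw [h, norm_zero] at hWnorm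
    linarith
  refine ⟨hWne, ?_⟩
  -- the key norm inequality
  set K : ℝ := 4/(2*(lam+mu)+1) with hKdef
  have hK0 : 0 < K := by rw [hKdef]; positivity
  have hK1 : K < 1 := by rw [hKdef, div_lt_one (by linarith)]; linarith
  have hK4 : K * (2*(lam+mu)+1) = 4 := by
    rw [hKdef]; field_simp
  clear_value K
  have hAB2 : (A+B) * (2*(lam+mu)-1) ≤ 2 := by
    rw [← le_div_iff₀ (by linarith)]
    exact hAB1
  have h6 : (0:ℝ) ≤ 4 - 4*A - (4*(lam+mu)-2)*B := by
    nlinarith [mul_nonneg hA0 (show (0:ℝ) ≤ 4*(lam+mu)-6 by linarith),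
      mul_nonneg hB0 (show (0:ℝ) ≤ 4*(lam+mu)-6 by linarith)]
  have h5 : (2*(lam+mu)+1) * (K - K*A - (2-K)*B) = 4 - 4*A - (4*(lam+mu)-2)*B := by
    linear_combination (1 - A + B) * hK4
  have hmain : 0 ≤ K - K*A - (2-K)*B := by
    have h21 : (0:ℝ) < 2*(lam+mu)+1 := by linarith
    nlinarith [h5, h6, h21]
  have harith : ‖T‖ ≤ K * ‖∑ m ∈ Finset.range (n+1), g m‖ - (1-K) * ‖T‖ := by
    have e1 : K * (1 - A) ≤ K * ‖∑ m ∈ Finset.range (n+1), g m‖ :=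
      mul_le_mul_of_nonneg_left hPnorm hK0.le
    have e2 : (1-K) * ‖T‖ ≤ (1-K) * B :=
      mul_le_mul_of_nonneg_left hTnorm (by linarith)
    linarith
  have hkey : ‖T‖ ≤ ‖(K:ℂ) * (∑' m : ℕ, g m) - T‖ := by
    have hrw : (K:ℂ) * (∑' m : ℕ, g m) - T
        = (K:ℂ) * (∑ m ∈ Finset.range (n+1), g m) + ((K:ℂ)-1) * T := by
      rw [← hsplit]; ring
    have h1 : ‖(K:ℂ) * (∑ m ∈ Finset.range (n+1), g m)‖
        = K * ‖∑ m ∈ Finset.range (n+1), g m‖ := by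
      rw [norm_mul, Complex.norm_real, Real.norm_eq_abs, abs_of_pos hK0]
    have h2 : ‖((K:ℂ)-1) * T‖ = (1-K) * ‖T‖ := by
      rw [norm_mul]
      congr 1
      rw [show ((K:ℂ)-1) = (((K-1 : ℝ)):ℂ) by push_cast; ring]
      rw [Complex.norm_real, Real.norm_eq_abs, abs_of_neg (by linarith)]
      ring
    have h3 : ‖(K:ℂ) * (∑ m ∈ Finset.range (n+1), g m)‖ - ‖((K:ℂ)-1) * T‖
        ≤ ‖(K:ℂ) * (∑ m ∈ Finset.range (n+1), g m) + ((K:ℂ)-1) * T‖ := by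
      have := norm_add_le ((K:ℂ) * (∑ m ∈ Finset.range (n+1), g m) + ((K:ℂ)-1) * T)
        (-(((K:ℂ)-1) * T))
      simpa using this
    rw [hrw]
    rw [h1, h2] at h3
    linarith
  -- translate to Re bound
  set Wv : ℂ := ∑' m : ℕ, g m with hWvdef
  clear_value Wv
  have hWvne : Wv ≠ 0 := hW ▸ hWne
  have hWvpos : 0 < ‖Wv‖ := norm_pos_iff.mpr hWvne
  set u : ℂ := T / Wv with hudef
  clear_value u
  have hkey2 : ‖u‖ ≤ ‖(K:ℂ) - u‖ := by
    have hrw2 : (K:ℂ) - u = ((K:ℂ) * Wv - T) / Wv := by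
      rw [hudef]
      field_simp
    rw [hrw2, hudef, norm_div, norm_div]
    exact div_le_div_of_nonneg_right hkey hWvpos.le
  have hre : u.re ≤ K/2 := by
    have h1 : Complex.normSq u ≤ Complex.normSq ((K:ℂ) - u) := by
      rw [← Complex.sq_norm, ← Complex.sq_norm]
      exact pow_le_pow_left₀ (norm_nonneg _) hkey2 2
    rw [Complex.normSq_sub] at h1
    have h2 : (((K:ℂ)) * (starRingEnd ℂ) u).re = K * u.re := by
      simp [Complex.mul_re, Complex.conj_re, Complex.conj_im]
    have h3 : Complex.normSq ((K:ℂ)) = K^2 := by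
      rw [Complex.normSq_ofReal]; ring
    rw [h2, h3] at h1
    have h1' : K * (2 * u.re) ≤ K * K := by nlinarith
    have h2' : 2 * u.re ≤ K := le_of_mul_le_mul_left h1' hK0
    linarith
  have hPsub : (∑ m ∈ Finset.range (n+1), g m) = Wv - T := eq_sub_of_add_eq hsplit
  have hPTW : normWright2PartialDeriv lam mu n z / normWright2Deriv lam mu z = 1 - u := by
    rw [hP, hW, hudef, hPsub, sub_div, div_self hWvne]
  rw [hPTW, Complex.sub_re, Complex.one_re]
  have hfin : (2*(lam+mu)-1)/(2*(lam+mu)+1) = 1 - K/2 := by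
    rw [hKdef]
    field_simp
    ring
  rw [hfin]
  linarith
end
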